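/- Let Z be an element of the MacNeille completion N(A*) of A* (realized as closed upper sets, i.e., Z = Z^∇Δ) with Z non-empty. If Z = XY for final segments X, Y of A*, then X and Y are also closed upper sets (X = X^∇Δ and Y = Y^∇Δ) and non-empty; consequently the monoid N°(A*) of non-empty closed upper sets is free. -/

import Mathlib

/-- The Higman (subword) ordering on words over an ordered alphabet `A`. -/
def Hig {A : Type*} [PartialOrder A] (u v : List A) : Prop :=
  List.SublistForall₂ (· ≤ ·) u v

/-- Elementwise concatenation of languages. -/
def conc {A : Type*} (X Y : Set (List A)) : Set (List A) :=
  Set.image2 (· ++ ·) X Y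

/-- A final segment (upward closed set) of `A*` for the Higman ordering. -/
def IsFinal {A : Type*} [PartialOrder A] (F : Set (List A)) : Prop :=
  ∀ ⦃a b : List A⦄, Hig a b → a ∈ F → b ∈ F

/-- Upward closure of a set of words. -/
def upset {A : Type*} [PartialOrder A] (X : Set (List A)) : Set (List A) :=
  {b | ∃ a ∈ X, Hig a b}

/-- The set of minimal elements of a set of words. -/
def minSet {A : Type*} [PartialOrder A] (X : Set (List A)) : Set (List A) :=
  {x | x ∈ X ∧ ∀ y ∈ X, Hig y x → y = x}

/-- An antichain of words for the Higman ordering. -/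
def IsAnti {A : Type*} [PartialOrder A] (U : Set (List A)) : Prop :=
  ∀ x ∈ U, ∀ y ∈ U, x ≠ y → ¬ Hig x y

/-- The upper cone of a set `X`: words above every element of `X`. -/
def upCone {A : Type*} [PartialOrder A] (X : Set (List A)) : Set (List A) :=
  {w | ∀ x ∈ X, Hig x w}

/-- The lower cone of a set `X`: words below every element of `X`. -/
def downCone {A : Type*} [PartialOrder A] (X : Set (List A)) : Set (List A) :=
  {w | ∀ x ∈ X, Hig w x}

/-- Closed upper sets: members of the MacNeille completion `N(A*)` of `A*`. -/
def IsClosedUpper {A : Type*} [PartialOrder A] (Z : Set (List A)) : Prop :=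
  Z = upCone (downCone Z)

/-- An irreducible member of the monoid `N°(A*)` of non-empty closed upper sets. -/
def IrredClosed {A : Type*} [PartialOrder A] (Z : Set (List A)) : Prop :=
  Z ≠ Set.univ ∧
    ∀ X Y : Set (List A), IsClosedUpper X → IsClosedUpper Y →
      Z = conc X Y → Z = X ∨ Z = Y


section HigLemmas
open List
set_option linter.unusedSectionVars false

variable {A : Type*} [PartialOrder A]

lemma hig_iff {u v : List A} : Hig u v ↔ ∃ l, List.Forall₂ (· ≤ ·) u l ∧ l <+ v :=
  List.sublistForall₂_iff

lemma forall₂_le_refl (u : List A) : List.Forall₂ (· ≤ ·) u u :=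
  List.forall₂_same.2 fun x _ => le_refl x

lemma hig_of_sublist {u v : List A} (h : u <+ v) : Hig u v :=
  hig_iff.2 ⟨u, forall₂_le_refl u, h⟩

lemma hig_refl (u : List A) : Hig u u := hig_of_sublist (List.Sublist.refl u)

lemma hig_nil (v : List A) : Hig [] v := hig_of_sublist (List.nil_sublist v)

lemma forall₂_sublist {r : A → A → Prop} {l₁ l₂ l₃ : List A}
    (hs : l₁ <+ l₂) (hf : List.Forall₂ r l₂ l₃) :
    ∃ l₄, List.Forall₂ r l₁ l₄ ∧ l₄ <+ l₃ := by
  induction hf generalizing l₁ with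
  | nil =>
    rw [List.sublist_nil.mp hs]
    exact ⟨[], List.Forall₂.nil, List.Sublist.refl _⟩
  | @cons a b la lb hab _ ih =>
    cases hs with
    | cons _ hs' =>
      obtain ⟨l₄, h1, h2⟩ := ih hs'
      exact ⟨l₄, h1, h2.cons b⟩
    | cons_cons _ hs' =>
      obtain ⟨l₄, h1, h2⟩ := ih hs'
      exact ⟨b :: l₄, List.Forall₂.cons hab h1, h2.cons₂ b⟩

lemma forall₂_le_trans {a b c : List A}
    (h1 : List.Forall₂ (· ≤ ·) a b) (h2 : List.Forall₂ (· ≤ ·) b c) :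
    List.Forall₂ (· ≤ ·) a c := by
  induction h1 generalizing c with
  | nil => cases h2; exact List.Forall₂.nil
  | cons hab _ ih =>
    cases h2 with
    | cons hbc h2' => exact List.Forall₂.cons (le_trans hab hbc) (ih h2')

lemma hig_trans {a b c : List A} (h1 : Hig a b) (h2 : Hig b c) : Hig a c := by
  obtain ⟨l1, f1, s1⟩ := hig_iff.1 h1
  obtain ⟨l2, f2, s2⟩ := hig_iff.1 h2
  obtain ⟨l3, f3, s3⟩ := forall₂_sublist s1 f2
  exact hig_iff.2 ⟨l3, forall₂_le_trans f1 f3, s3.trans s2⟩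

lemma hig_append {a b c d : List A} (h1 : Hig a c) (h2 : Hig b d) :
    Hig (a ++ b) (c ++ d) := by
  obtain ⟨l1, f1, s1⟩ := hig_iff.1 h1
  obtain ⟨l2, f2, s2⟩ := hig_iff.1 h2
  exact hig_iff.2 ⟨l1 ++ l2, List.rel_append f1 f2, s1.append s2⟩

lemma hig_split {d u v : List A} (h : Hig d (u ++ v)) :
    ∃ i, i ≤ d.length ∧ Hig (d.take i) u ∧ Hig (d.drop i) v := by
  obtain ⟨l, f, s⟩ := hig_iff.1 h
  obtain ⟨l₁, l₂, rfl, s₁, s₂⟩ := List.sublist_append_iff.1 s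
  have hlen : d.length = l₁.length + l₂.length := by
    have := f.length_eq; simpa using this
  refine ⟨l₁.length, by omega, ?_, ?_⟩
  · refine hig_iff.2 ⟨l₁, ?_, s₁⟩
    have := List.forall₂_take l₁.length f
    rwa [List.take_left] at this
  · refine hig_iff.2 ⟨l₂, ?_, s₂⟩
    have := List.forall₂_drop l₁.length f
    rwa [List.drop_left] at this

lemma hig_split' {u v w : List A} (h : Hig (u ++ v) w) :
    ∃ i, Hig u (w.take i) ∧ Hig v (w.drop i) := by
  obtain ⟨l, f, s⟩ := hig_iff.1 h
  have f1 : List.Forall₂ (· ≤ ·) u (l.take u.length) := by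
    have := List.forall₂_take u.length f
    rwa [List.take_left] at this
  have f2 : List.Forall₂ (· ≤ ·) v (l.drop u.length) := by
    have := List.forall₂_drop u.length f
    rwa [List.drop_left] at this
  have hs : l.take u.length ++ l.drop u.length <+ w := by
    rw [List.take_append_drop]; exact s
  obtain ⟨w₁, w₂, rfl, s₁, s₂⟩ := List.append_sublist_iff.1 hs
  refine ⟨w₁.length, ?_, ?_⟩
  · rw [List.take_left]; exact hig_iff.2 ⟨_, f1, s₁⟩
  · rw [List.drop_left]; exact hig_iff.2 ⟨_, f2, s₂⟩

lemma hig_take_take {i j : ℕ} (h : i ≤ j) (d : List A) : Hig (d.take i) (d.take j) := by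
  have : d.take i = (d.take j).take i := by rw [List.take_take, min_eq_left h]
  rw [this]; exact hig_of_sublist (List.take_sublist _ _)

lemma hig_drop_drop {i j : ℕ} (h : i ≤ j) (d : List A) : Hig (d.drop j) (d.drop i) := by
  have : d.drop j = (d.drop i).drop (j - i) := by
    rw [List.drop_drop]; congr 1; omega
  rw [this]; exact hig_of_sublist (List.drop_sublist _ _)

lemma hig_prefix (u v : List A) : Hig u (u ++ v) :=
  hig_of_sublist (List.sublist_append_left u v)

lemma hig_suffix (u v : List A) : Hig v (u ++ v) :=
  hig_of_sublist (List.sublist_append_right u v)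

end HigLemmas

section SetLemmas
open List
set_option linter.unusedSectionVars false

variable {A : Type*} [PartialOrder A]

lemma mem_conc {X Y : Set (List A)} {z : List A} :
    z ∈ conc X Y ↔ ∃ x ∈ X, ∃ y ∈ Y, x ++ y = z := Set.mem_image2

lemma mem_conc_of {X Y : Set (List A)} {x y : List A} (hx : x ∈ X) (hy : y ∈ Y) :
    x ++ y ∈ conc X Y := mem_conc.2 ⟨x, hx, y, hy, rfl⟩

lemma conc_assoc (X Y W : Set (List A)) : conc (conc X Y) W = conc X (conc Y W) := by
  ext z
  constructor
  · rintro ⟨-, ⟨x, hx, y, hy, rfl⟩, w, hw, rfl⟩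
    exact ⟨x, hx, y ++ w, mem_conc_of hy hw, (List.append_assoc x y w).symm⟩
  · rintro ⟨x, hx, -, ⟨y, hy, w, hw, rfl⟩, rfl⟩
    exact ⟨x ++ y, mem_conc_of hx hy, w, hw, List.append_assoc x y w⟩

lemma conc_final {X Y : Set (List A)} (hX : IsFinal X) (hY : IsFinal Y) :
    IsFinal (conc X Y) := by
  rintro a b hab ⟨x, hx, y, hy, rfl⟩
  obtain ⟨i, h1, h2⟩ := hig_split' hab
  exact mem_conc.2 ⟨b.take i, hX h1 hx, b.drop i, hY h2 hy,
    List.take_append_drop i b⟩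

lemma final_univ : IsFinal (Set.univ : Set (List A)) := fun _ _ _ _ => trivial

lemma conc_univ {X : Set (List A)} (hX : IsFinal X) : conc X Set.univ = X := by
  ext z
  constructor
  · rintro ⟨x, hx, y, -, rfl⟩
    exact hX (hig_prefix x y) hx
  · intro hz
    exact ⟨z, hz, [], trivial, List.append_nil z⟩

lemma univ_conc {Y : Set (List A)} (hY : IsFinal Y) : conc Set.univ Y = Y := by
  ext z
  constructor
  · rintro ⟨x, -, y, hy, rfl⟩
    exact hY (hig_suffix x y) hy
  · intro hz
    exact ⟨[], trivial, z, hz, rfl⟩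

lemma conc_nonempty {X Y : Set (List A)} (hX : X.Nonempty) (hY : Y.Nonempty) :
    (conc X Y).Nonempty := by
  obtain ⟨x, hx⟩ := hX; obtain ⟨y, hy⟩ := hY
  exact ⟨x ++ y, mem_conc_of hx hy⟩

lemma nonempty_of_conc {X Y : Set (List A)} (h : (conc X Y).Nonempty) :
    X.Nonempty ∧ Y.Nonempty := by
  obtain ⟨z, x, hx, y, hy, rfl⟩ := h
  exact ⟨⟨x, hx⟩, ⟨y, hy⟩⟩

lemma upCone_final (S : Set (List A)) : IsFinal (upCone S) := by
  intro a b hab ha s hs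
  exact hig_trans (ha s hs) hab

lemma closed_final {Z : Set (List A)} (hZ : IsClosedUpper Z) : IsFinal Z := by
  rw [hZ]; exact upCone_final _

lemma subset_upCone_downCone (X : Set (List A)) : X ⊆ upCone (downCone X) :=
  fun x hx d hd => hd x hx

lemma closed_of_eq_upCone {Z : Set (List A)} (S : Set (List A)) (h : Z = upCone S) :
    IsClosedUpper Z := by
  have h1 : S ⊆ downCone Z := by
    intro s hs w hw
    rw [h] at hw; exact hw s hs
  have h2 : upCone (downCone Z) ⊆ Z := by
    intro w hw
    rw [h]; intro s hs
    exact hw s (h1 hs)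
  exact Set.Subset.antisymm (subset_upCone_downCone Z) h2

/-- key list helper: splitting an equality of appended lists. -/
lemma append_eq_split {a b c d : List A} (h : a ++ b = c ++ d) (hl : c.length ≤ a.length) :
    ∃ e, a = c ++ e ∧ d = e ++ b := by
  rcases List.append_eq_append_iff.1 h with ⟨e, he1, he2⟩ | ⟨e, he1, he2⟩
  · have : e = [] := by
      have := congrArg List.length he1
      simp at this
      have : e.length = 0 := by omega
      exact List.length_eq_zero_iff.mp this
    subst this
    refine ⟨[], by simpa using he1.symm, by simpa using he2.symm⟩
  · exact ⟨e, he1, he2⟩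

/-- Descent lemma (left quotient identity). -/
lemma lq {X Y : Set (List A)} (hX : IsFinal X) {u : List A}
    (H : ∀ y ∈ Y, u ++ y ∈ conc X Y) {y₀ : List A} (hy₀ : y₀ ∈ Y) : u ∈ X := by
  suffices h : ∀ n, ∀ y ∈ Y, y.length = n → u ∈ X from h y₀.length y₀ hy₀ rfl
  intro n
  induction n using Nat.strong_induction_on with
  | _ n ih =>
    intro y hy hlen
    obtain ⟨x, hx, y', hy', heq⟩ := mem_conc.1 (H y hy)
    rcases le_or_gt x.length u.length with hle | hlt
    · obtain ⟨e, he1, -⟩ := append_eq_split heq.symm hle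
      rw [he1]; exact hX (hig_prefix x e) hx
    · obtain ⟨e, he1, he2⟩ := append_eq_split heq (le_of_lt hlt)
      by_cases h0 : e = []
      · rw [h0, List.append_nil] at he1
        exact he1 ▸ hx
      · have hel : 0 < e.length := List.length_pos_iff.2 h0
        have hyl := congrArg List.length he2
        simp [List.length_append] at hyl
        exact ih y'.length (by omega) y' hy' rfl

/-- Descent lemma (right quotient identity). -/
lemma rq {X Y : Set (List A)} (hY : IsFinal Y) {v : List A}
    (H : ∀ x ∈ X, x ++ v ∈ conc X Y) {x₀ : List A} (hx₀ : x₀ ∈ X) : v ∈ Y := by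
  suffices h : ∀ n, ∀ x ∈ X, x.length = n → v ∈ Y from h x₀.length x₀ hx₀ rfl
  intro n
  induction n using Nat.strong_induction_on with
  | _ n ih =>
    intro x hx hlen
    obtain ⟨x', hx', y, hy, heq⟩ := mem_conc.1 (H x hx)
    rcases le_or_gt x'.length x.length with hle | hlt
    · obtain ⟨e, he1, he2⟩ := append_eq_split heq.symm hle
      by_cases h0 : e = []
      · rw [h0] at he2
        rw [he2] at hy; simpa using hy
      · have hel : 0 < e.length := List.length_pos_iff.2 h0
        have hxl := congrArg List.length he1
        simp [List.length_append] at hxl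
        exact ih x'.length (by omega) x' hx' rfl
    · obtain ⟨e, he1, he2⟩ := append_eq_split heq (le_of_lt hlt)
      rw [he2]; exact hY (hig_suffix e y) hy

lemma cancel_right {B C Y : Set (List A)} (hB : IsFinal B) (hC : IsFinal C)
    (hY : Y.Nonempty) (h : conc B Y = conc C Y) : B = C := by
  obtain ⟨y₀, hy₀⟩ := hY
  ext u
  constructor
  · intro hu
    refine lq hC (fun y hy => ?_) hy₀
    rw [← h]; exact mem_conc_of hu hy
  · intro hu
    refine lq hB (fun y hy => ?_) hy₀
    rw [h]; exact mem_conc_of hu hy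

lemma cancel_left {X R S : Set (List A)} (hR : IsFinal R) (hS : IsFinal S)
    (hX : X.Nonempty) (h : conc X R = conc X S) : R = S := by
  obtain ⟨x₀, hx₀⟩ := hX
  ext v
  constructor
  · intro hv
    refine rq hS (fun x hx => ?_) hx₀
    rw [← h]; exact mem_conc_of hx hv
  · intro hv
    refine rq hR (fun x hx => ?_) hx₀
    rw [h]; exact mem_conc_of hx hv

end SetLemmas

section LenLevi
open List
set_option linter.unusedSectionVars false
set_option linter.unusedVariables false

variable {A : Type*} [PartialOrder A]

/-- minimal length of a word in `Z`. -/
noncomputable def wlen (Z : Set (List A)) : ℕ := sInf {n | ∃ z ∈ Z, z.length = n}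

lemma wlen_exists {Z : Set (List A)} (h : Z.Nonempty) : ∃ z ∈ Z, z.length = wlen Z := by
  obtain ⟨z, hz⟩ := h
  exact Nat.sInf_mem (⟨z.length, z, hz, rfl⟩ : {n | ∃ z ∈ Z, z.length = n}.Nonempty)

lemma wlen_le {Z : Set (List A)} {z : List A} (hz : z ∈ Z) : wlen Z ≤ z.length :=
  Nat.sInf_le ⟨z, hz, rfl⟩

lemma wlen_conc {X Y : Set (List A)} (hX : X.Nonempty) (hY : Y.Nonempty) :
    wlen (conc X Y) = wlen X + wlen Y := by
  apply Nat.le_antisymm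
  · obtain ⟨x, hx, hxl⟩ := wlen_exists hX
    obtain ⟨y, hy, hyl⟩ := wlen_exists hY
    have := wlen_le (mem_conc_of hx hy)
    rwa [List.length_append, hxl, hyl] at this
  · obtain ⟨z, hz, hzl⟩ := wlen_exists (conc_nonempty hX hY)
    obtain ⟨x, hx, y, hy, rfl⟩ := mem_conc.1 hz
    rw [← hzl, List.length_append]
    exact Nat.add_le_add (wlen_le hx) (wlen_le hy)

lemma wlen_univ : wlen (Set.univ : Set (List A)) = 0 :=
  Nat.le_zero.mp (by simpa using wlen_le (Set.mem_univ ([] : List A)))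

lemma univ_of_wlen_zero {Z : Set (List A)} (hfin : IsFinal Z) (hne : Z.Nonempty)
    (h : wlen Z = 0) : Z = Set.univ := by
  obtain ⟨z, hz, hzl⟩ := wlen_exists hne
  rw [h] at hzl
  have : z = [] := List.length_eq_zero_iff.mp hzl
  subst this
  ext w
  simp only [Set.mem_univ, iff_true]
  exact hfin (hig_nil w) hz

lemma wlen_pos {Z : Set (List A)} (hfin : IsFinal Z) (hne : Z.Nonempty)
    (h : Z ≠ Set.univ) : 0 < wlen Z := by
  rcases Nat.eq_zero_or_pos (wlen Z) with h0 | h0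
  · exact absurd (univ_of_wlen_zero hfin hne h0) h
  · exact h0

/-- One-element test: a quotient of `Z = X₁X₂` by a minimal-length element of `X₁`. -/
lemma min_elt_quot {X₁ X₂ : Set (List A)} (hX₂ : IsFinal X₂) {u v : List A}
    (hmin : ∀ x ∈ X₁, u.length ≤ x.length)
    (h : u ++ v ∈ conc X₁ X₂) : v ∈ X₂ := by
  obtain ⟨x₁, hx₁, x₂, hx₂, heq⟩ := mem_conc.1 h
  obtain ⟨e, he1, he2⟩ := append_eq_split heq (hmin x₁ hx₁)
  rw [he2]
  exact hX₂ (hig_suffix e x₂) hx₂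

/-- Levi property for final segments. -/
lemma levi {X₁ X₂ Y₁ Y₂ : Set (List A)}
    (hX₁ : IsFinal X₁) (hX₂ : IsFinal X₂) (hY₁ : IsFinal Y₁) (hY₂ : IsFinal Y₂)
    (nX₁ : X₁.Nonempty) (nX₂ : X₂.Nonempty) (nY₁ : Y₁.Nonempty) (nY₂ : Y₂.Nonempty)
    (hZ : conc X₁ X₂ = conc Y₁ Y₂) (hlen : wlen X₁ ≤ wlen Y₁) :
    ∃ W : Set (List A), IsFinal W ∧ W.Nonempty ∧ Y₁ = conc X₁ W ∧ X₂ = conc W Y₂ := by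
  classical
  set W : Set (List A) := {w | ∀ s ∈ Y₂, w ++ s ∈ X₂} with hW
  obtain ⟨u, hu, hul⟩ := wlen_exists nX₁
  have hmin : ∀ x ∈ X₁, u.length ≤ x.length := by
    intro x hx; rw [hul]; exact wlen_le hx
  have hWfin : IsFinal W := by
    intro a b hab ha s hs
    exact hX₂ (hig_append hab (hig_refl s)) (ha s hs)
  have hWne : W.Nonempty := by
    obtain ⟨v, hv⟩ := nX₂
    exact ⟨v, fun s hs => hX₂ (hig_prefix v s) hv⟩
  have ha : X₂ = conc W Y₂ := by
    apply Set.Subset.antisymm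
    · intro v hv
      have h1 : u ++ v ∈ conc Y₁ Y₂ := by rw [← hZ]; exact mem_conc_of hu hv
      obtain ⟨t, ht, s, hs, heq⟩ := mem_conc.1 h1
      have htl : u.length ≤ t.length := by
        rw [hul]; exact le_trans hlen (wlen_le ht)
      obtain ⟨c, hc1, hc2⟩ := append_eq_split heq htl
      have hcW : c ∈ W := by
        intro s' hs'
        refine min_elt_quot hX₂ hmin ?_
        rw [hZ, ← List.append_assoc, ← hc1]
        exact mem_conc_of ht hs'
      rw [hc2]
      exact mem_conc_of hcW hs
    · rintro v ⟨w, hw, s, hs, rfl⟩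
      exact hw s hs
  refine ⟨W, hWfin, hWne, ?_, ha⟩
  have h2 : conc (conc X₁ W) Y₂ = conc Y₁ Y₂ := by
    rw [conc_assoc, ← ha, hZ]
  exact (cancel_right (conc_final hX₁ hWfin) hY₁ nY₂ h2).symm

end LenLevi

section PartOne
open List
set_option linter.unusedSectionVars false
set_option linter.unusedVariables false

variable {A : Type*} [PartialOrder A]

lemma part1_left {Z X Y : Set (List A)} (hZc : IsClosedUpper Z) (hZn : Z.Nonempty)
    (hX : IsFinal X) (hY : IsFinal Y) (hfac : Z = conc X Y) : IsClosedUpper X := by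
  obtain ⟨z, hz⟩ := hZn
  obtain ⟨x₀, hx₀, y₀, hy₀, -⟩ := mem_conc.1 (hfac ▸ hz)
  have main : upCone (downCone X) ⊆ X := by
    intro w hw
    have step1 : ∀ y ∈ Y, w ++ y ∈ Z := by
      intro y hy
      rw [hZc]
      intro d hd
      have hSne : ({i | Hig (d.drop i) y} : Set ℕ).Nonempty :=
        ⟨d.length, by simpa [List.drop_length] using hig_nil y⟩
      set i₀ := sInf {i | Hig (d.drop i) y} with hi₀
      have hmem : Hig (d.drop i₀) y := Nat.sInf_mem hSne
      have hclaim : d.take i₀ ∈ downCone X := by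
        intro x hx
        have hdx : Hig d (x ++ y) := hd _ (by rw [hfac]; exact mem_conc_of hx hy)
        obtain ⟨i, hi, h1, h2⟩ := hig_split hdx
        have : i₀ ≤ i := Nat.sInf_le h2
        exact hig_trans (hig_take_take this d) h1
      have h3 : Hig (d.take i₀) w := hw _ hclaim
      have h4 : Hig (d.take i₀ ++ d.drop i₀) (w ++ y) := hig_append h3 hmem
      rwa [List.take_append_drop] at h4
    have H : ∀ y ∈ Y, w ++ y ∈ conc X Y := fun y hy => hfac ▸ step1 y hy
    exact lq hX H hy₀
  exact closed_of_eq_upCone (downCone X)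
    (Set.Subset.antisymm (subset_upCone_downCone X) main)

lemma part1_right {Z X Y : Set (List A)} (hZc : IsClosedUpper Z) (hZn : Z.Nonempty)
    (hX : IsFinal X) (hY : IsFinal Y) (hfac : Z = conc X Y) : IsClosedUpper Y := by
  obtain ⟨z, hz⟩ := hZn
  obtain ⟨x₀, hx₀, y₀, hy₀, -⟩ := mem_conc.1 (hfac ▸ hz)
  have main : upCone (downCone Y) ⊆ Y := by
    intro w hw
    have step1 : ∀ x ∈ X, x ++ w ∈ Z := by
      intro x hx
      rw [hZc]
      intro d hd
      have hSne : ({j | j ≤ d.length ∧ Hig (d.take j) x} : Set ℕ).Nonempty :=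
        ⟨0, Nat.zero_le _, by simpa using hig_nil x⟩
      have hSbdd : BddAbove {j | j ≤ d.length ∧ Hig (d.take j) x} :=
        ⟨d.length, fun j hj => hj.1⟩
      set j₀ := sSup {j | j ≤ d.length ∧ Hig (d.take j) x} with hj₀
      have hmem : j₀ ≤ d.length ∧ Hig (d.take j₀) x := Nat.sSup_mem hSne hSbdd
      have hclaim : d.drop j₀ ∈ downCone Y := by
        intro y hy
        have hdx : Hig d (x ++ y) := hd _ (by rw [hfac]; exact mem_conc_of hx hy)
        obtain ⟨i, hi, h1, h2⟩ := hig_split hdx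
        have : i ≤ j₀ := le_csSup hSbdd ⟨hi, h1⟩
        exact hig_trans (hig_drop_drop this d) h2
      have h3 : Hig (d.drop j₀) w := hw _ hclaim
      have h4 : Hig (d.take j₀ ++ d.drop j₀) (x ++ w) := hig_append hmem.2 h3
      rwa [List.take_append_drop] at h4
    have H : ∀ x ∈ X, x ++ w ∈ conc X Y := fun x hx => hfac ▸ step1 x hx
    exact rq hY H hx₀
  exact closed_of_eq_upCone (downCone Y)
    (Set.Subset.antisymm (subset_upCone_downCone Y) main)

lemma part1 {Z X Y : Set (List A)} (hZc : IsClosedUpper Z) (hZn : Z.Nonempty)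
    (hX : IsFinal X) (hY : IsFinal Y) (hfac : Z = conc X Y) :
    IsClosedUpper X ∧ IsClosedUpper Y ∧ X.Nonempty ∧ Y.Nonempty := by
  obtain ⟨z, hz⟩ := hZn
  obtain ⟨x₀, hx₀, y₀, hy₀, -⟩ := mem_conc.1 (hfac ▸ hz)
  exact ⟨part1_left hZc ⟨z, hz⟩ hX hY hfac, part1_right hZc ⟨z, hz⟩ hX hY hfac,
    ⟨x₀, hx₀⟩, ⟨y₀, hy₀⟩⟩

end PartOne

section PartTwo
open List
set_option linter.unusedSectionVars false
set_option linter.unusedVariables false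

variable {A : Type*} [PartialOrder A]

/-- the factorization predicate. -/
def Sat (Z : Set (List A)) (l : List (Set (List A))) : Prop :=
  (∀ G ∈ l, IsClosedUpper G ∧ G.Nonempty ∧ IrredClosed G) ∧
    l.foldr conc Set.univ = Z

lemma foldr_final {l : List (Set (List A))} (h : ∀ G ∈ l, IsFinal G) :
    IsFinal (l.foldr conc Set.univ) := by
  induction l with
  | nil => exact final_univ
  | cons a t ih =>
    exact conc_final (h a (List.mem_cons_self))
      (ih fun G hG => h G (List.mem_cons_of_mem a hG))

lemma foldr_nonempty {l : List (Set (List A))} (h : ∀ G ∈ l, G.Nonempty) :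
    (l.foldr conc Set.univ).Nonempty := by
  induction l with
  | nil => exact ⟨[], trivial⟩
  | cons a t ih =>
    exact conc_nonempty (h a (List.mem_cons_self))
      (ih fun G hG => h G (List.mem_cons_of_mem a hG))

lemma foldr_conc_base {l : List (Set (List A))} {B : Set (List A)}
    (h : ∀ G ∈ l, IsFinal G) (hB : IsFinal B) :
    l.foldr conc B = conc (l.foldr conc Set.univ) B := by
  induction l with
  | nil => exact (univ_conc hB).symm
  | cons a t ih =>
    simp only [List.foldr_cons]
    rw [ih fun G hG => h G (List.mem_cons_of_mem a hG), ← conc_assoc]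

lemma eq_head {Z G H R S : Set (List A)} (hZc : IsClosedUpper Z) (hZn : Z.Nonempty)
    (hGc : IsClosedUpper G) (hHc : IsClosedUpper H)
    (hGi : IrredClosed G) (hHi : IrredClosed H)
    (hR : IsFinal R) (hS : IsFinal S)
    (h1 : Z = conc G R) (h2 : Z = conc H S)
    (hlen : wlen G ≤ wlen H) : G = H := by
  obtain ⟨-, -, hGn, hRn⟩ := part1 hZc hZn (closed_final hGc) hR h1
  obtain ⟨-, -, hHn, hSn⟩ := part1 hZc hZn (closed_final hHc) hS h2
  obtain ⟨W, hWfin, hWne, hHW, -⟩ :=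
    levi (closed_final hGc) hR (closed_final hHc) hS hGn hRn hHn hSn
      (h1.symm.trans h2) hlen
  have hWc : IsClosedUpper W :=
    (part1 hHc hHn (closed_final hGc) hWfin hHW).2.1
  rcases hHi.2 G W hGc hWc hHW with hHG | hHWW
  · exact hHG.symm
  · exfalso
    rw [← hHWW] at hHW
    have hlenH : wlen H = wlen G + wlen H := by
      conv_lhs => rw [hHW]
      exact wlen_conc hGn hHn
    have hG0 : wlen G = 0 := by omega
    exact hGi.1 (univ_of_wlen_zero (closed_final hGc) hGn hG0)

lemma main_ind : ∀ n : ℕ, ∀ Z : Set (List A), IsClosedUpper Z → Z.Nonempty →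
    wlen Z = n →
    (∃ l, Sat Z l) ∧ (∀ l₁ l₂, Sat Z l₁ → Sat Z l₂ → l₁ = l₂) := by
  intro n
  induction n using Nat.strong_induction_on with
  | _ n ih =>
    intro Z hZc hZn hn
    constructor
    · -- existence
      by_cases hU : Z = Set.univ
      · exact ⟨[], by simp [Sat], hU.symm⟩
      by_cases hIr : IrredClosed Z
      · refine ⟨[Z], ?_, ?_⟩
        · intro G hG
          simp only [List.mem_singleton] at hG
          subst hG
          exact ⟨hZc, hZn, hIr⟩
        · simpa using conc_univ (closed_final hZc)
      · rw [IrredClosed, not_and_or] at hIr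
        rcases hIr with h | h
        · exact absurd hU (by simpa using h)
        push_neg at h
        obtain ⟨X, Y, hXc, hYc, hfac, hne1, hne2⟩ := h
        obtain ⟨-, -, hXn, hYn⟩ := part1 hZc hZn (closed_final hXc) (closed_final hYc) hfac
        have hXU : X ≠ Set.univ := by
          intro h0
          exact hne2 (by rw [hfac, h0, univ_conc (closed_final hYc)])
        have hYU : Y ≠ Set.univ := by
          intro h0
          exact hne1 (by rw [hfac, h0, conc_univ (closed_final hXc)])
        have hsum : n = wlen X + wlen Y := by
          rw [← hn, hfac]; exact wlen_conc hXn hYn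
        have hXp : 0 < wlen X := wlen_pos (closed_final hXc) hXn hXU
        have hYp : 0 < wlen Y := wlen_pos (closed_final hYc) hYn hYU
        obtain ⟨⟨lX, hlX⟩, -⟩ := ih (wlen X) (by omega) X hXc hXn rfl
        obtain ⟨⟨lY, hlY⟩, -⟩ := ih (wlen Y) (by omega) Y hYc hYn rfl
        refine ⟨lX ++ lY, ?_, ?_⟩
        · intro G hG
          rcases List.mem_append.1 hG with h' | h'
          · exact hlX.1 G h'
          · exact hlY.1 G h'
        · rw [List.foldr_append, hlY.2,
            foldr_conc_base (fun G hG => closed_final (hlX.1 G hG).1) (closed_final hYc),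
            hlX.2, ← hfac]
    · -- uniqueness
      intro l₁ l₂ sat₁ sat₂
      cases l₁ with
      | nil =>
        have hU : Z = Set.univ := sat₁.2.symm
        cases l₂ with
        | nil => rfl
        | cons H k =>
          exfalso
          obtain ⟨hHc, hHn, hHi⟩ := sat₂.1 H (List.mem_cons_self)
          have hSn : (k.foldr conc Set.univ).Nonempty :=
            foldr_nonempty fun G hG => (sat₂.1 G (List.mem_cons_of_mem H hG)).2.1
          have h2 : Z = conc H (k.foldr conc Set.univ) := sat₂.2.symm
          have : wlen Z = wlen H + wlen (k.foldr conc Set.univ) := by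
            rw [h2]; exact wlen_conc hHn hSn
          have h0 : wlen Z = 0 := by rw [hU]; exact wlen_univ
          exact hHi.1 (univ_of_wlen_zero (closed_final hHc) hHn (by omega))
      | cons G r =>
        cases l₂ with
        | nil =>
          exfalso
          have hU : Z = Set.univ := sat₂.2.symm
          obtain ⟨hGc, hGn, hGi⟩ := sat₁.1 G (List.mem_cons_self)
          have hRn : (r.foldr conc Set.univ).Nonempty :=
            foldr_nonempty fun G' hG' => (sat₁.1 G' (List.mem_cons_of_mem G hG')).2.1
          have h1 : Z = conc G (r.foldr conc Set.univ) := sat₁.2.symm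
          have : wlen Z = wlen G + wlen (r.foldr conc Set.univ) := by
            rw [h1]; exact wlen_conc hGn hRn
          have h0 : wlen Z = 0 := by rw [hU]; exact wlen_univ
          exact hGi.1 (univ_of_wlen_zero (closed_final hGc) hGn (by omega))
        | cons H k =>
          obtain ⟨hGc, hGn, hGi⟩ := sat₁.1 G (List.mem_cons_self)
          obtain ⟨hHc, hHn, hHi⟩ := sat₂.1 H (List.mem_cons_self)
          set R := r.foldr conc Set.univ with hRdef
          set S := k.foldr conc Set.univ with hSdef
          have hRfin : IsFinal R :=
            foldr_final fun G' hG' => closed_final (sat₁.1 G' (List.mem_cons_of_mem G hG')).1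
          have hSfin : IsFinal S :=
            foldr_final fun G' hG' => closed_final (sat₂.1 G' (List.mem_cons_of_mem H hG')).1
          have hRn : R.Nonempty :=
            foldr_nonempty fun G' hG' => (sat₁.1 G' (List.mem_cons_of_mem G hG')).2.1
          have hSn : S.Nonempty :=
            foldr_nonempty fun G' hG' => (sat₂.1 G' (List.mem_cons_of_mem H hG')).2.1
          have h1 : Z = conc G R := sat₁.2.symm
          have h2 : Z = conc H S := sat₂.2.symm
          have hGH : G = H := by
            rcases le_total (wlen G) (wlen H) with hle | hle
            · exact eq_head hZc hZn hGc hHc hGi hHi hRfin hSfin h1 h2 hle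
            · exact (eq_head hZc hZn hHc hGc hHi hGi hSfin hRfin h2 h1 hle).symm
          have hRS : R = S := by
            refine cancel_left hRfin hSfin hGn ?_
            rw [← h1, h2, hGH]
          have hRc : IsClosedUpper R :=
            part1_right hZc hZn (closed_final hGc) hRfin h1
          have hGU : G ≠ Set.univ := hGi.1
          have hGp : 0 < wlen G := wlen_pos (closed_final hGc) hGn hGU
          have hsum : n = wlen G + wlen R := by
            rw [← hn, h1]; exact wlen_conc hGn hRn
          obtain ⟨-, huniq⟩ := ih (wlen R) (by omega) R hRc hRn rfl
          have hrk : r = k := by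
            refine huniq r k ⟨?_, rfl⟩ ⟨?_, hRS.symm ▸ rfl⟩
            · exact fun G' hG' => sat₁.1 G' (List.mem_cons_of_mem G hG')
            · exact fun G' hG' => sat₂.1 G' (List.mem_cons_of_mem H hG')
          rw [hGH, hrk]

end PartTwo

theorem stmt19 {A : Type*} [PartialOrder A] :
    (∀ Z X Y : Set (List A), IsClosedUpper Z → Z.Nonempty →
      IsFinal X → IsFinal Y → Z = conc X Y →
      IsClosedUpper X ∧ IsClosedUpper Y ∧ X.Nonempty ∧ Y.Nonempty) ∧
    (∀ Z : Set (List A), IsClosedUpper Z → Z.Nonempty →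
      ∃! l : List (Set (List A)),
        (∀ G ∈ l, IsClosedUpper G ∧ G.Nonempty ∧ IrredClosed G) ∧
        l.foldr conc Set.univ = Z) := by
  constructor
  · intro Z X Y hZc hZn hX hY hfac
    exact part1 hZc hZn hX hY hfac
  · intro Z hZc hZn
    obtain ⟨⟨l, hl⟩, huniq⟩ := main_ind (wlen Z) Z hZc hZn rfl
    exact ⟨l, hl, fun l' hl' => huniq l' l hl' hl⟩
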